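/- Let q be an even prime power with q ≡ 2 (mod 3), and let x ∈ F_{q³}* satisfy Tr_{q³/q}(x) = 0 and N_{q³/q}(x) = 1. Set a = Tr_{q³/q}(x^{1+q}). Then Tr_{q/2}(a³) = 1, where Tr_{q/2} is the absolute trace from F_q to F₂. -/

import Mathlib

set_option maxHeartbeats 1000000 in
theorem abs_trace_a_cubed_eq_one (n q : ℕ) (hn : Odd n) (hn0 : 0 < n)
    (hq : q = 2 ^ n) (hq3 : q % 3 = 2)
    (K : Type) [Field K] [Fintype K] (hK : Fintype.card K = q ^ 3)
    (x : K) (hx : x ≠ 0) (htr : x + x ^ q + x ^ q ^ 2 = 0)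
    (hnorm : x ^ (1 + q + q ^ 2) = 1) :
    ∑ i ∈ Finset.range n,
        ((x ^ (1 + q) + (x ^ (1 + q)) ^ q + (x ^ (1 + q)) ^ q ^ 2) ^ 3) ^ 2 ^ i = 1 := by
  have hchar : CharP K 2 := by
    obtain ⟨m, hp, hcard⟩ := FiniteField.card K (ringChar K)
    have hdvd : ringChar K ∣ 2 ^ (3 * n) := by
      have : ringChar K ∣ Fintype.card K := by
        rw [hcard]; exact dvd_pow_self _ (by positivity)
      rwa [hK, hq, ← pow_mul, mul_comm n 3] at this
    have h2 : ringChar K = 2 :=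
      (Nat.prime_dvd_prime_iff_eq hp Nat.prime_two).mp (hp.dvd_of_dvd_pow hdvd)
    rw [← h2]; exact ringChar.charP K
  have h2 : (2 : K) = 0 := by
    have := CharP.cast_eq_zero K 2; exact_mod_cast this
  -- Frobenius (q-power map) as ring hom
  set Φ : K →+* K := iterateFrobenius K 2 n with hΦdef
  have hΦ : ∀ y : K, Φ y = y ^ q := by
    intro y; rw [hΦdef, iterateFrobenius_def, hq]
  -- q^3-power is identity
  have hq3pow : ∀ y : K, y ^ q ^ 3 = y := by
    intro y; rw [← hK]; exact FiniteField.pow_card y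
  set v := x ^ q with hvdef
  set u := x ^ q ^ 2 with hudef
  have hvq : v ^ q = u := by rw [hvdef, hudef, ← pow_mul, ← pow_two]
  have huq : u ^ q = x := by
    rw [hudef, ← pow_mul, ← pow_succ]; exact hq3pow x
  clear_value v u
  have htr' : x + v + u = 0 := htr
  have hN : x * v * u = 1 := by
    rw [pow_add, pow_add, pow_one, ← hvdef, ← hudef] at hnorm; exact hnorm
  set a : K := x ^ (1 + q) + (x ^ (1 + q)) ^ q + (x ^ (1 + q)) ^ q ^ 2 with hadef
  have e1 : x ^ (1 + q) = x * v := by rw [pow_add, pow_one, ← hvdef]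
  have e2 : (x * v) ^ q = v * u := by rw [mul_pow, ← hvdef, hvq]
  have e3 : (x * v) ^ q ^ 2 = u * x := by
    rw [pow_two, pow_mul, e2, mul_pow, hvq, huq]
  have ha : a = x * v + v * u + u * x := by rw [hadef, e1, e2, e3]
  clear_value a
  have haq : a ^ q = a := by
    rw [ha, ← hΦ, map_add, map_add, map_mul, map_mul, map_mul, hΦ, hΦ, hΦ, hvq, huq]
    rw [← hvdef]
    ring
  have hx3 : x ^ 3 = a * x + 1 := by
    rw [ha]
    linear_combination hN + (x^3 + x^2*v + x*v^2) * h2 - (x^2 + 2*x*v) * htr'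
  have hxqne : v ≠ x := by
    intro hvx
    have hux : u = x := by rw [← hvq, hvx, ← hvdef, hvx]
    rw [hvx, hux] at htr'
    apply hx
    linear_combination htr' - x * h2
  -- power sums setup
  have hfrob : ∀ y z : K, (y + z) ^ q = y ^ q + z ^ q := by
    intro y z; rw [hq]; exact add_pow_char_pow y z 2 n
  set c : K := a ^ 3 with hcdef
  have hcq : c ^ q = c := by
    rw [hcdef, ← pow_mul, mul_comm, pow_mul, haq]
  clear_value c
  set S : K := ∑ i ∈ Finset.range n, c ^ 2 ^ i with hSdef
  clear_value S
  have hS1 : S ^ 2 = ∑ i ∈ Finset.range n, c ^ 2 ^ (i + 1) := by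
    rw [hSdef, ← frobenius_def, map_sum]
    exact Finset.sum_congr rfl fun i _ => by rw [frobenius_def, ← pow_mul, pow_succ]
  have hS2 : S ^ 2 = S := by
    have hs1 := Finset.sum_range_succ' (fun i => c ^ 2 ^ i) n
    have hs2 := Finset.sum_range_succ (fun i => c ^ 2 ^ i) n
    rw [show c ^ 2 ^ n = c by rw [← hq]; exact hcq] at hs2
    rw [← hSdef] at hs2
    rw [hS1]
    linear_combination hs2 - hs1
  have hScases : S = 0 ∨ S = 1 := by
    rcases mul_eq_zero.mp (show S * (S - 1) = 0 by linear_combination hS2) with h | h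
    · exact Or.inl h
    · exact Or.inr (by linear_combination h)
  rcases hScases with hS0 | hS1'
  swap
  · exact hS1'
  exfalso
  -- construct a root r of T^3 + a T + 1 in the "subfield F_q"
  obtain ⟨r, hrq, hr3⟩ : ∃ r : K, r ^ q = r ∧ r ^ 3 + a * r + 1 = 0 := by
    by_cases ha0 : a = 0
    · exact ⟨1, one_pow q, by rw [ha0]; linear_combination h2⟩
    · set P : ℕ → K := fun k => ∑ i ∈ Finset.range k, c ^ 2 ^ i with hPdef
      clear_value P
      have hPsucc : ∀ k, P (k + 1) = P k + c ^ 2 ^ k := by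
        intro k
        simp only [hPdef]
        exact Finset.sum_range_succ _ _
      have hPsq : ∀ k, (P k) ^ 2 = P (k + 1) + c := by
        intro k
        induction k with
        | zero =>
          simp only [hPdef, zero_add, Finset.sum_range_zero, Finset.sum_range_one, pow_zero,
            pow_one]
          linear_combination -c * h2
        | succ k ih =>
          rw [hPsucc (k + 1), hPsucc k]
          rw [hPsucc k] at ih
          have c2 : c ^ 2 ^ (k + 1) = (c ^ 2 ^ k) ^ 2 := by rw [← pow_mul, pow_succ]
          rw [c2]
          linear_combination ih + (P k * c ^ 2 ^ k) * h2
      set w : K := ∑ k ∈ Finset.range n, P k with hwdef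
      clear_value w
      have hw : w ^ 2 = w + c := by
        have h1 : w ^ 2 = ∑ k ∈ Finset.range n, (P k) ^ 2 := by
          rw [hwdef, ← frobenius_def, map_sum]
          exact Finset.sum_congr rfl fun k _ => frobenius_def ..
        rw [h1]
        have h2' : ∑ k ∈ Finset.range n, (P k) ^ 2
            = (∑ k ∈ Finset.range n, P (k + 1)) + (n : K) * c := by
          simp_rw [hPsq]
          rw [Finset.sum_add_distrib, Finset.sum_const, Finset.card_range, nsmul_eq_mul]
        have h3 : ∑ k ∈ Finset.range n, P (k + 1) = w + P n := by
          have e1 := Finset.sum_range_succ' P n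
          have e2 := Finset.sum_range_succ P n
          have e0 : P 0 = 0 := by simp [hPdef]
          rw [e0] at e1
          rw [← hwdef] at e2
          linear_combination e2 - e1
        have hPn : P n = S := by rw [hSdef, hPdef]
        have hnK : (n : K) = 1 := by
          obtain ⟨m, hm⟩ := hn
          rw [hm]; push_cast; linear_combination (m : K) * h2
        rw [h2', h3, hPn, hS0, hnK]
        ring
      have hPq : ∀ k, (P k) ^ q = P k := by
        intro k
        rw [hPdef]
        conv_lhs => rw [← hΦ]
        rw [map_sum]
        exact Finset.sum_congr rfl fun i _ => by rw [map_pow, hΦ, hcq]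
      have hwq : w ^ q = w := by
        rw [hwdef]
        conv_lhs => rw [← hΦ]
        rw [map_sum]
        exact Finset.sum_congr rfl fun k _ => by rw [hΦ]; exact hPq k
      have hwne : w ≠ 0 := by
        intro h0
        apply ha0
        have hc0 : c = 0 := by linear_combination (w + 1) * h0 - hw - w * h2
        rw [hcdef] at hc0
        exact pow_eq_zero_iff (three_ne_zero) |>.mp hc0
      -- cube root of w
      have hqpos : 0 < q := by rw [hq]; positivity
      have hcop : (Nat.card Kˣ).Coprime 3 := by
        have hcard : Nat.card Kˣ = q ^ 3 - 1 := by
          rw [Nat.card_units, Nat.card_eq_fintype_card, hK]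
        have h1 : q ^ 3 % 3 = 2 := by rw [Nat.pow_mod, hq3]
        have h2q : 1 ≤ q ^ 3 := Nat.one_le_pow _ _ hqpos
        rw [hcard]
        exact Nat.Coprime.symm (Nat.prime_three.coprime_iff_not_dvd.mpr (by omega))
      obtain ⟨su, hsu⟩ := (powCoprime hcop).surjective (Units.mk0 w hwne)
      simp only [powCoprime_apply] at hsu
      have hs3 : (su : K) ^ 3 = w := by
        have := congrArg Units.val hsu
        push_cast at this
        exact this
      have hsuq : su ^ q = su := by
        apply (powCoprime hcop).injective
        simp only [powCoprime_apply]
        rw [← pow_mul, mul_comm, pow_mul, hsu]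
        ext
        push_cast
        exact hwq
      have hsq : (su : K) ^ q = (su : K) := by
        have := congrArg Units.val hsuq
        push_cast at this
        exact this
      have hsne : (su : K) ≠ 0 := su.ne_zero
      refine ⟨(su : K) + a * (su : K)⁻¹, ?_, ?_⟩
      · rw [hfrob, mul_pow, inv_pow, hsq, haq]
      · field_simp
        linear_combination ((su : K) ^ 3 + w + 1) * hs3 + hw
          + hcdef
          + (w + a ^ 3 + 2 * a * (su : K) ^ 4 + 2 * a ^ 2 * (su : K) ^ 2) * h2
  -- now derive a contradiction
  have hxr : x ≠ r := by
    intro h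
    apply hxqne
    rw [hvdef, h, hrq, ← h]
  have hprod : (x + r) * (x ^ 2 + r * x + (r ^ 2 + a)) = 0 := by
    linear_combination hx3 + hr3 + (r * x ^ 2 + r ^ 2 * x + a * x) * h2
  have hxrne : x + r ≠ 0 := by
    intro h
    apply hxr
    linear_combination h - r * h2
  have hquad : x ^ 2 + r * x + (r ^ 2 + a) = 0 :=
    (mul_eq_zero.mp hprod).resolve_left hxrne
  have hquadq : v ^ 2 + r * v + (r ^ 2 + a) = 0 := by
    have hΦq := congrArg Φ hquad
    simp only [map_add, map_mul, map_pow, map_zero] at hΦq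
    simp only [hΦ] at hΦq
    rw [hrq, haq, ← hvdef] at hΦq
    exact hΦq
  have hfac : (v + x) * (v + x + r) = 0 := by
    linear_combination hquadq - hquad + (v * x + x ^ 2 + r * x) * h2
  rcases mul_eq_zero.mp hfac with h | h
  · exact hxqne (by linear_combination h - x * h2)
  · have hvr : v = x + r := by linear_combination h - (x + r) * h2
    have hu2 : u = v + r := by
      rw [← hvq, hvr, hfrob, hrq, ← hvdef, hvr]
    rw [hvr, hu2, hvr] at htr'
    exact hxrne (by linear_combination htr' - (x + r) * h2)
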